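/- Let 𝔤 be a finite-dimensional solvable real Lie algebra and 𝔤₀ ⊆ 𝔤 a Lie subalgebra with the minimality property that every Lie subalgebra 𝔤' ⊆ 𝔤 satisfying 𝔤' + 𝔤₀ = 𝔤 equals 𝔤. Then 𝔤₀ is contained in a nilpotent ideal of 𝔤; hence 𝔤₀ is contained in the nilradical of 𝔤. -/

import Mathlib

open Module LieAlgebra LieModule
open scoped TensorProduct

universe u v

section Aux

section TraceLemma

variable {K : Type*} [Field K] [CharZero K]
variable {L : Type*} [LieRing L] [LieAlgebra K L]
variable {M : Type*} [AddCommGroup M] [Module K M] [LieRingModule L M] [LieModule K L M]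
variable [FiniteDimensional K M]

/-- The key character-zero lemma underlying Lie's theorem: if `w ≠ 0` is a common
eigenvector for an "ideal-like" subspace `p` with eigenvalue function `χ`, then `χ ⁅h, x⁆ = 0`
for every `x : L` and `h ∈ p`. -/
theorem chi_lie_eq_zero (p : Submodule K L) (hp : ∀ (x : L), ∀ h ∈ p, ⁅x, h⁆ ∈ p)
    (χ : L → K) (w : M) (hw : w ≠ 0)
    (hwe : ∀ h ∈ p, ⁅h, w⁆ = χ h • w) (x : L) {h : L} (hh : h ∈ p) :
    χ ⁅h, x⁆ = 0 := by
  set φ : Module.End K M := toEnd K L M x with hφ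
  set V : ℕ → Submodule K M :=
    fun j => Submodule.span K ((fun k => (φ ^ k) w) '' {k | k < j}) with hV
  have hVmono : Monotone V := by
    intro i j hij
    exact Submodule.span_mono (Set.image_mono fun k hk => lt_of_lt_of_le hk hij)
  -- generators
  have hgen : ∀ {k j : ℕ}, k < j → (φ ^ k) w ∈ V j := fun {k j} hk =>
    Submodule.subset_span ⟨k, hk, rfl⟩
  -- the key computation
  have hkey : ∀ (k : ℕ), ∀ y ∈ p, ⁅y, (φ ^ k) w⁆ - χ y • (φ ^ k) w ∈ V k := by
    intro k
    induction k with
    | zero =>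
      intro y hy
      rw [pow_zero, Module.End.one_apply, hwe y hy, sub_self]
      exact Submodule.zero_mem _
    | succ k ih =>
      intro y hy
      have hyx : ⁅y, x⁆ ∈ p := by
        have := hp x y hy
        rw [← lie_skew] at this
        simpa using neg_mem this
      have h1 := ih ⁅y, x⁆ hyx
      have h2 := ih y hy
      have hps : (φ ^ (k + 1)) w = ⁅x, (φ ^ k) w⁆ := by
        rw [pow_succ', Module.End.mul_apply, hφ, toEnd_apply_apply]
      have hid : ⁅y, (φ ^ (k+1)) w⁆ - χ y • (φ ^ (k+1)) w
          = ((⁅⁅y, x⁆, (φ ^ k) w⁆ - χ ⁅y, x⁆ • (φ ^ k) w)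
            + χ ⁅y, x⁆ • (φ ^ k) w)
            + ⁅x, ⁅y, (φ ^ k) w⁆ - χ y • (φ ^ k) w⁆ := by
        rw [hps, leibniz_lie, lie_sub, lie_smul]
        abel
      rw [hid]
      refine add_mem (add_mem (hVmono (Nat.le_succ k) h1)
        (Submodule.smul_mem _ _ (hgen (Nat.lt_succ_self k)))) ?_
      have : ⁅x, ⁅y, (φ ^ k) w⁆ - χ y • (φ ^ k) w⁆ = φ (⁅y, (φ ^ k) w⁆ - χ y • (φ ^ k) w) := by
        rw [hφ, toEnd_apply_apply]
      rw [this]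
      -- φ maps V k into V (k+1)
      have hmap : Submodule.map φ (V k) ≤ V (k + 1) := by
        rw [hV]
        rw [Submodule.map_span_le]
        rintro m ⟨k', hk', rfl⟩
        have : φ ((φ ^ k') w) = (φ ^ (k' + 1)) w := by
          rw [pow_succ', Module.End.mul_apply]
        rw [this]
        exact hgen (Nat.succ_lt_succ hk')
      exact hmap ⟨_, h2, rfl⟩
  -- stabilization
  obtain ⟨Nn, hNn⟩ := monotone_stabilizes_iff_noetherian.mpr
    (inferInstance : IsNoetherian K M) ⟨V, hVmono⟩
  have hst : ∀ m, Nn ≤ m → V m = V Nn := fun m hm => (hNn m hm).symm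
  have hUgen : ∀ k : ℕ, (φ ^ k) w ∈ V Nn := by
    intro k
    rcases le_total (k + 1) Nn with h' | h'
    · exact hVmono h' (hgen (Nat.lt_succ_self k))
    · rw [← hst (k+1) h']
      exact hgen (Nat.lt_succ_self k)
  have hwU : w ∈ V Nn := by
    have := hUgen 0
    rwa [pow_zero, Module.End.one_apply] at this
  have hφU : ∀ m ∈ V Nn, φ m ∈ V Nn := by
    intro m hm
    have hmap : Submodule.map φ (V Nn) ≤ V (Nn + 1) := by
      rw [Submodule.map_span_le]
      rintro m' ⟨k', hk', rfl⟩
      have : φ ((φ ^ k') w) = (φ ^ (k' + 1)) w := by rw [pow_succ', Module.End.mul_apply]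
      rw [this]; exact hgen (Nat.succ_lt_succ hk')
    have h1 : V (Nn + 1) = V Nn := hst (Nn+1) (Nat.le_succ Nn)
    exact h1 ▸ hmap ⟨m, hm, rfl⟩
  -- action of elements of p preserves U, and is "χ·id + nilpotent"
  have hyU : ∀ y ∈ p, ∀ m ∈ V Nn, ⁅y, m⁆ ∈ V Nn := by
    intro y hy m hm
    have hmap : Submodule.map (toEnd K L M y) (V Nn) ≤ V Nn := by
      rw [Submodule.map_span_le]
      rintro m' ⟨k', hk', rfl⟩
      rw [toEnd_apply_apply]
      have := hkey k' y hy
      have h2 : ⁅y, (φ ^ k') w⁆ = (⁅y, (φ ^ k') w⁆ - χ y • (φ ^ k') w) + χ y • (φ ^ k') w := by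
        abel
      rw [h2]
      exact add_mem (hVmono (le_of_lt hk') this) (Submodule.smul_mem _ _ (hgen hk'))
    exact hmap ⟨m, hm, rfl⟩
  -- trace of restriction of any y ∈ p
  have htr : ∀ (y : L) (hy : y ∈ p),
      LinearMap.trace K (V Nn) ((toEnd K L M y).restrict (hyU y hy))
        = (finrank K (V Nn) : K) * χ y := by
    intro y hy
    set Y : Module.End K (V Nn) := (toEnd K L M y).restrict (hyU y hy) with hY
    set T : Module.End K (V Nn) := Y - χ y • 1 with hT
    -- T maps (elements over) V (j+1) to V j
    have hTmem : ∀ (u : V Nn) (j : ℕ), (u : M) ∈ V (j + 1) → ((T u : V Nn) : M) ∈ V j := by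
      intro u j hu
      have hcoe : ((T u : V Nn) : M) = ⁅y, (u : M)⁆ - χ y • (u : M) := by
        simp [hT, hY, LinearMap.restrict_coe_apply, toEnd_apply_apply]; rfl
      rw [hcoe]
      set g : M →ₗ[K] M := toEnd K L M y - χ y • LinearMap.id with hg
      have hgeq : ⁅y, (u : M)⁆ - χ y • (u : M) = g (u : M) := by
        simp [hg, toEnd_apply_apply]
      rw [hgeq]
      have hmap : Submodule.map g (V (j+1)) ≤ V j := by
        rw [Submodule.map_span_le]
        rintro m' ⟨k', hk', rfl⟩
        have hgv : g ((φ ^ k') w) = ⁅y, (φ ^ k') w⁆ - χ y • (φ ^ k') w := by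
          simp [hg, toEnd_apply_apply]
        rw [hgv]
        exact hVmono (Nat.lt_succ_iff.mp hk') (hkey k' y hy)
      exact hmap ⟨(u : M), hu, rfl⟩
    have hTnil : ∀ (j : ℕ) (u : V Nn), (u : M) ∈ V j → (T ^ j) u = 0 := by
      intro j
      induction j with
      | zero =>
        intro u hu
        have : (u : M) ∈ (⊥ : Submodule K M) := by
          have hV0 : V 0 = ⊥ := by
            have : {k : ℕ | k < 0} = (∅ : Set ℕ) := by ext k; simp
            rw [hV]; simp [this]
          rwa [hV0] at hu
        have : (u : M) = 0 := by simpa using this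
        rw [pow_zero, Module.End.one_apply]
        exact Subtype.ext this
      | succ j ihj =>
        intro u hu
        have : (T ^ (j + 1)) u = (T ^ j) (T u) := by
          rw [pow_succ, Module.End.mul_apply]
        rw [this]
        exact ihj (T u) (hTmem u j hu)
    have hTnilp : IsNilpotent T := by
      refine ⟨Nn, ?_⟩
      ext u
      have : ((T ^ Nn) u : M) = (0 : M) := by
        rw [hTnil Nn u u.2]; rfl
      simpa using this
    have htrT : LinearMap.trace K (V Nn) T = 0 :=
      IsNilpotent.eq_zero (LinearMap.isNilpotent_trace_of_isNilpotent hTnilp)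
    have hYT : Y = T + χ y • 1 := by rw [hT]; abel
    rw [hYT, map_add, htrT, zero_add, map_smul, LinearMap.trace_one]
    simp [mul_comm]
  -- the commutator has zero trace
  have hbr : ⁅h, x⁆ ∈ p := by
    have := hp x h hh
    rw [← lie_skew] at this
    simpa using neg_mem this
  have hcomm : (toEnd K L M ⁅h, x⁆).restrict (hyU ⁅h, x⁆ hbr)
      = ((toEnd K L M h).restrict (hyU h hh)) * (φ.restrict hφU)
        - (φ.restrict hφU) * ((toEnd K L M h).restrict (hyU h hh)) := by
    ext u
    have : ((((toEnd K L M ⁅h, x⁆).restrict (hyU ⁅h, x⁆ hbr)) u : V Nn) : M)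
        = ⁅h, ⁅x, (u : M)⁆⁆ - ⁅x, ⁅h, (u : M)⁆⁆ := by
      show ⁅⁅h, x⁆, (u : M)⁆ = _; rw [lie_lie]
    rw [this]
    simp [LinearMap.restrict_coe_apply, toEnd_apply_apply, hφ]; rfl
  have htr0 : LinearMap.trace K (V Nn) ((toEnd K L M ⁅h, x⁆).restrict (hyU ⁅h, x⁆ hbr)) = 0 := by
    rw [hcomm, map_sub, LinearMap.trace_mul_comm, sub_self]
  have hfr : (finrank K (V Nn) : K) * χ ⁅h, x⁆ = 0 := by
    rw [← htr ⁅h, x⁆ hbr, htr0]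
  have hU0 : finrank K (V Nn) ≠ 0 := by
    have : (V Nn) ≠ ⊥ := by
      intro hbot
      rw [hbot] at hwU
      exact hw (by simpa using hwU)
    intro h0
    exact this (Submodule.finrank_eq_zero.mp h0)
  have : (finrank K (V Nn) : K) ≠ 0 := Nat.cast_ne_zero.mpr hU0
  rcases mul_eq_zero.mp hfr with h' | h'
  · exact absurd h' this
  · exact h'

end TraceLemma

/-- Lie's theorem (existence of a common eigenvector), over `ℂ`. -/
theorem lie_thm_aux : ∀ (n : ℕ) (L : Type u) [inst1 : LieRing L] [inst2 : LieAlgebra ℂ L]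
    [inst3 : FiniteDimensional ℂ L] [inst4 : LieAlgebra.IsSolvable L]
    (M : Type v) [inst5 : AddCommGroup M] [inst6 : Module ℂ M] [inst7 : LieRingModule L M]
    [inst8 : LieModule ℂ L M] [inst9 : FiniteDimensional ℂ M] [inst10 : Nontrivial M],
    finrank ℂ L = n →
    ∃ (χ : L → ℂ) (m : M), m ≠ 0 ∧ ∀ x : L, ⁅x, m⁆ = χ x • m := by
  intro n
  induction n using Nat.strong_induction_on with
  | _ n ih =>
  intro L _ _ _ _ M _ _ _ _ _ _ hn
  rcases Nat.eq_zero_or_pos n with hn0 | hnpos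
  · -- L is trivial
    subst hn0
    haveI : Subsingleton L := finrank_zero_iff.mp hn
    obtain ⟨m, hm⟩ := exists_ne (0 : M)
    refine ⟨fun _ => 0, m, hm, fun x => ?_⟩
    rw [Subsingleton.elim x 0, zero_lie, zero_smul]
  · haveI : Nontrivial L := Module.nontrivial_of_finrank_pos (hn ▸ hnpos)
    have hD : derivedSeries ℂ L 1 < ⊤ := derivedSeries_lt_top_of_solvable ℂ L
    obtain ⟨x₀, -, hx₀⟩ := SetLike.exists_of_lt hD
    have hx₀' : x₀ ∉ (derivedSeries ℂ L 1).toSubmodule := hx₀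
    obtain ⟨f, hfx₀, hfD⟩ := Submodule.exists_dual_map_eq_bot_of_notMem hx₀' inferInstance
    have hker : (derivedSeries ℂ L 1).toSubmodule ≤ LinearMap.ker f := by
      intro y hy
      have : f y ∈ Submodule.map f (derivedSeries ℂ L 1).toSubmodule := ⟨y, hy, rfl⟩
      rw [hfD] at this
      simpa using this
    -- a canonical element with f z = 1
    set z : L := (f x₀)⁻¹ • x₀ with hz
    have hfz : f z = 1 := by
      rw [hz, map_smul, smul_eq_mul, inv_mul_cancel₀ hfx₀]
    -- all brackets lie in the derived series
    have hbr : ∀ a b : L, ⁅a, b⁆ ∈ derivedSeries ℂ L 1 := by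
      intro a b
      rw [derivedSeries_def, derivedSeriesOfIdeal_succ, derivedSeriesOfIdeal_zero]
      exact LieSubmodule.lie_mem_lie (LieSubmodule.mem_top a) (LieSubmodule.mem_top b)
    have hbrker : ∀ a b : L, f ⁅a, b⁆ = 0 := fun a b => hker (hbr a b)
    -- the hyperplane subalgebra
    set p : LieSubalgebra ℂ L :=
      { toSubmodule := LinearMap.ker f
        lie_mem' := fun {a b} _ _ => by
          show ⁅a, b⁆ ∈ LinearMap.ker f
          rw [LinearMap.mem_ker]
          exact hbrker a b } with hpdef
    have hmemp : ∀ y : L, y ∈ p ↔ f y = 0 := fun y => Iff.rfl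
    have hpideal : ∀ (a : L), ∀ y ∈ p, ⁅a, y⁆ ∈ p := fun a y _ => (hmemp _).mpr (hbrker a y)
    haveI : LieAlgebra.IsSolvable ↥p := Function.Injective.lieAlgebra_isSolvable
      (f := p.incl) Subtype.coe_injective
    -- finrank of the hyperplane
    have hrange : LinearMap.range f = ⊤ := by
      rw [LinearMap.range_eq_top]
      intro c
      exact ⟨c • z, by rw [map_smul, hfz, smul_eq_mul, mul_one]⟩
    have hfrp : finrank ℂ ↥p = n - 1 := by
      have h1 := LinearMap.finrank_range_add_finrank_ker f
      rw [hrange, hn] at h1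
      have h2 : finrank ℂ ↥(⊤ : Submodule ℂ ℂ) = 1 := by
        rw [finrank_top, finrank_self]
      have h3 : finrank ℂ ↥p = finrank ℂ ↥(LinearMap.ker f) := rfl
      omega
    have hlt : n - 1 < n := by omega
    obtain ⟨χ₀, m₀, hm₀, he₀⟩ := ih (n - 1) hlt ↥p M hfrp
    -- the eigenvalue function on L
    classical
    set χ₁ : L → ℂ := fun y => if hy : y ∈ p then χ₀ ⟨y, hy⟩ else 0 with hχ₁
    have hχ₁p : ∀ (y : L) (hy : y ∈ p), χ₁ y = χ₀ ⟨y, hy⟩ := by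
      intro y hy; rw [hχ₁]; simp [hy]
    -- the common eigenspace
    set W : Submodule ℂ M :=
      { carrier := {m | ∀ h : L, h ∈ p → ⁅h, m⁆ = χ₁ h • m}
        zero_mem' := by intro h hh; rw [lie_zero, smul_zero]
        add_mem' := by
          intro a b ha hb h hh
          rw [lie_add, ha h hh, hb h hh, smul_add]
        smul_mem' := by
          intro c a ha h hh
          rw [lie_smul, ha h hh, smul_comm] } with hW
    have hmW : ∀ m : M, m ∈ W ↔ ∀ h : L, h ∈ p → ⁅h, m⁆ = χ₁ h • m := fun m => Iff.rfl
    have hm₀W : m₀ ∈ W := by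
      rw [hmW]
      intro h hh
      rw [hχ₁p h hh]
      exact he₀ ⟨h, hh⟩
    -- invariance of W
    have hWinv : ∀ (a : L), ∀ m ∈ W, ⁅a, m⁆ ∈ W := by
      intro a m hm
      rw [hmW] at hm ⊢
      intro h hh
      by_cases hm0 : m = 0
      · subst hm0; rw [lie_zero, lie_zero, smul_zero]
      · have h0 : χ₁ ⁅h, a⁆ = 0 :=
          chi_lie_eq_zero p.toSubmodule hpideal χ₁ m hm0 hm a hh
        have hha : ⁅h, a⁆ ∈ p := by
          have := hpideal a h hh
          rw [← lie_skew] at this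
          simpa using neg_mem this
        rw [leibniz_lie, hm ⁅h, a⁆ hha, h0, zero_smul, zero_add, hm h hh, lie_smul]
    -- eigenvector for the extra element z
    haveI : Nontrivial ↥W := ⟨⟨⟨m₀, hm₀W⟩, 0, by simp [Submodule.mk_eq_zero, hm₀]⟩⟩
    have hWz : ∀ m ∈ W, (toEnd ℂ L M z) m ∈ W := by
      intro m hm
      rw [toEnd_apply_apply]
      exact hWinv z m hm
    obtain ⟨c, hc⟩ := Module.End.exists_eigenvalue ((toEnd ℂ L M z).restrict hWz)
    obtain ⟨v, hv⟩ := hc.exists_hasEigenvector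
    have hvm : (v : M) ≠ 0 := by
      intro h0
      exact hv.right (by simpa using Subtype.ext h0)
    have hzv : ⁅z, (v : M)⁆ = c • (v : M) := by
      have := congrArg (Subtype.val) hv.apply_eq_smul
      rw [LinearMap.restrict_coe_apply, toEnd_apply_apply] at this
      simpa using this
    refine ⟨fun y => χ₁ (y - f y • z) + f y * c, (v : M), hvm, fun x => ?_⟩
    have hxp : x - f x • z ∈ p := by
      rw [hmemp, map_sub, map_smul, hfz, smul_eq_mul, mul_one, sub_self]
    have hsplit : x = (x - f x • z) + f x • z := by abel
    calc ⁅x, (v : M)⁆ = ⁅(x - f x • z) + f x • z, (v : M)⁆ := by rw [← hsplit]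
      _ = ⁅x - f x • z, (v : M)⁆ + f x • ⁅z, (v : M)⁆ := by rw [add_lie, smul_lie]
      _ = χ₁ (x - f x • z) • (v : M) + f x • (c • (v : M)) := by
          rw [(hmW (v : M)).mp v.2 _ hxp, hzv]
      _ = (χ₁ (x - f x • z) + f x * c) • (v : M) := by
          rw [add_smul, mul_smul]


/-- Elements of the derived algebra of a complex solvable Lie algebra act nilpotently on any
finite-dimensional module. -/
theorem derived_nilpotent_aux : ∀ (n : ℕ) (L : Type u) [inst1 : LieRing L]
    [inst2 : LieAlgebra ℂ L] [inst3 : FiniteDimensional ℂ L] [inst4 : LieAlgebra.IsSolvable L]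
    (M : Type v) [inst5 : AddCommGroup M] [inst6 : Module ℂ M] [inst7 : LieRingModule L M]
    [inst8 : LieModule ℂ L M] [inst9 : FiniteDimensional ℂ M],
    finrank ℂ M = n →
    ∀ x ∈ derivedSeries ℂ L 1, IsNilpotent (toEnd ℂ L M x) := by
  intro n
  induction n using Nat.strong_induction_on with
  | _ n ih =>
  intro L _ _ _ _ M _ _ _ _ _ hn x hx
  by_cases hM : Subsingleton M
  · refine ⟨1, ?_⟩
    ext m
    rw [pow_one]
    exact Subsingleton.elim _ _
  · haveI : Nontrivial M := not_subsingleton_iff_nontrivial.mp hM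
    obtain ⟨χ, m, hm, he⟩ := lie_thm_aux (finrank ℂ L) L M rfl
    -- χ vanishes on brackets
    have hχbr : ∀ a b : L, χ ⁅a, b⁆ = 0 := by
      intro a b
      have h1 : χ ⁅a, b⁆ • m = 0 := by
        rw [← he ⁅a, b⁆, lie_lie, he a, he b, lie_smul, lie_smul, he a, he b,
          smul_smul, smul_smul, mul_comm, sub_self]
      rcases smul_eq_zero.mp h1 with h' | h'
      · exact h'
      · exact absurd h' hm
    -- χ is linear
    have hinj : Function.Injective (fun c : ℂ => c • m) := smul_left_injective ℂ hm
    have hadd : ∀ a b : L, χ (a + b) = χ a + χ b := by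
      intro a b
      apply hinj
      show χ (a+b) • m = (χ a + χ b) • m
      rw [← he (a+b), add_lie, he a, he b, add_smul]
    have hsmul : ∀ (t : ℂ) (a : L), χ (t • a) = t * χ a := by
      intro t a
      apply hinj
      show χ (t • a) • m = (t * χ a) • m
      rw [← he (t • a), smul_lie, he a, smul_smul]
    -- χ vanishes on the derived series
    have hχD : ∀ y ∈ derivedSeries ℂ L 1, χ y = 0 := by
      set χₗ : L →ₗ[ℂ] ℂ :=
        { toFun := χ
          map_add' := hadd
          map_smul' := hsmul } with hχₗ
      intro y hy
      have hle : (derivedSeries ℂ L 1).toSubmodule ≤ LinearMap.ker χₗ := by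
        rw [derivedSeries_def, derivedSeriesOfIdeal_succ, derivedSeriesOfIdeal_zero,
          LieSubmodule.lieIdeal_oper_eq_linear_span']
        rw [Submodule.span_le]
        rintro _ ⟨a, -, b, -, rfl⟩
        simp only [SetLike.mem_coe, LinearMap.mem_ker]
        exact hχbr a b
      have := hle hy
      exact this
    have hxm : ⁅x, m⁆ = 0 := by rw [he x, hχD x hx, zero_smul]
    -- the line spanned by m is a Lie submodule
    set N' : LieSubmodule ℂ L M :=
      { toSubmodule := Submodule.span ℂ {m}
        lie_mem := by
          intro y n hn
          rcases Submodule.mem_span_singleton.mp hn with ⟨t, rfl⟩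
          show ⁅y, t • m⁆ ∈ Submodule.span ℂ {m}
          rw [lie_smul, he y, smul_smul]
          exact Submodule.mem_span_singleton.mpr ⟨t * χ y, rfl⟩ } with hN'
    have hmN' : m ∈ N' := Submodule.mem_span_singleton_self m
    -- quotient module is smaller
    have hNbot : N'.toSubmodule ≠ ⊥ := by
      intro h0
      rw [hN'] at h0
      have : m ∈ (⊥ : Submodule ℂ M) := h0 ▸ Submodule.mem_span_singleton_self m
      exact hm (by simpa using this)
    have hfrN : 0 < finrank ℂ N'.toSubmodule := by
      rcases Nat.eq_zero_or_pos (finrank ℂ N'.toSubmodule) with h0 | h0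
      · exact absurd (Submodule.finrank_eq_zero.mp h0) hNbot
      · exact h0
    have hq : finrank ℂ (M ⧸ N'.toSubmodule) < n := by
      have := Submodule.finrank_quotient_add_finrank N'.toSubmodule
      omega
    have hq' : finrank ℂ (M ⧸ N') = finrank ℂ (M ⧸ N'.toSubmodule) := rfl
    have hnil : IsNilpotent (toEnd ℂ L (M ⧸ N') x) :=
      ih (finrank ℂ (M ⧸ N')) (hq' ▸ hq) L (M ⧸ N') rfl x hx
    obtain ⟨k, hk⟩ := hnil
    refine ⟨k + 1, ?_⟩
    -- compatibility of powers with the quotient map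
    have hcompat : ∀ (j : ℕ) (m' : M),
        LieSubmodule.Quotient.mk' N' ((toEnd ℂ L M x ^ j) m')
          = (toEnd ℂ L (M ⧸ N') x ^ j) (LieSubmodule.Quotient.mk' N' m') := by
      intro j
      induction j with
      | zero => intro m'; simp
      | succ j ihj =>
        intro m'
        rw [pow_succ', pow_succ', Module.End.mul_apply, Module.End.mul_apply, ← ihj,
          toEnd_apply_apply, toEnd_apply_apply, LieModuleHom.map_lie]
    ext m'
    have h1 : (toEnd ℂ L M x ^ k) m' ∈ N' := by
      have h2 := hcompat k m'
      rw [hk] at h2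
      have h3 : LieSubmodule.Quotient.mk' N' ((toEnd ℂ L M x ^ k) m') = 0 := by
        rw [h2]; rfl
      exact (LieSubmodule.Quotient.mk_eq_zero').mp h3
    rcases Submodule.mem_span_singleton.mp h1 with ⟨t, ht⟩
    have h4 : (toEnd ℂ L M x ^ (k+1)) m' = 0 := by
      rw [pow_succ', Module.End.mul_apply, ← ht, map_smul, toEnd_apply_apply, hxm, smul_zero]
    simpa using h4


variable {𝔤 : Type u} [LieRing 𝔤] [LieAlgebra ℝ 𝔤] [FiniteDimensional ℝ 𝔤]
  [LieAlgebra.IsSolvable 𝔤]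

/-- Base change of the derived series. -/
theorem derivedSeries_baseChange (k : ℕ) :
    derivedSeries ℂ (ℂ ⊗[ℝ] 𝔤) k = (derivedSeries ℝ 𝔤 k).baseChange ℂ := by
  induction k with
  | zero =>
    rw [derivedSeries_def, derivedSeries_def, derivedSeriesOfIdeal_zero,
      derivedSeriesOfIdeal_zero, LieSubmodule.baseChange_top]
  | succ k ihk =>
    have h1 : derivedSeries ℂ (ℂ ⊗[ℝ] 𝔤) (k+1)
        = ⁅derivedSeries ℂ (ℂ ⊗[ℝ] 𝔤) k, derivedSeries ℂ (ℂ ⊗[ℝ] 𝔤) k⁆ := by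
      rw [derivedSeries_def, derivedSeriesOfIdeal_succ]
    have h2 : derivedSeries ℝ 𝔤 (k+1) = ⁅derivedSeries ℝ 𝔤 k, derivedSeries ℝ 𝔤 k⁆ := by
      rw [derivedSeries_def, derivedSeriesOfIdeal_succ]
    rw [h1, h2, ihk, LieSubmodule.lie_baseChange]

instance : LieAlgebra.IsSolvable (ℂ ⊗[ℝ] 𝔤) := by
  obtain ⟨k, hk⟩ := LieAlgebra.IsSolvable.solvable ℝ 𝔤
  exact LieAlgebra.IsSolvable.mk (R := ℂ) (k := k) (by rw [_root_.derivedSeries_baseChange, hk, LieSubmodule.baseChange_bot])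

/-- `1 ⊗ m = 0` implies `m = 0`. -/
theorem one_tmul_eq_zero_iff {m : 𝔤} (h : (1 : ℂ) ⊗ₜ[ℝ] m = 0) : m = 0 := by
  have h2 := congrArg (fun t => (TensorProduct.lid ℝ 𝔤)
    ((TensorProduct.map Complex.reLm LinearMap.id) t)) h
  simpa using h2

/-- Every element of the derived algebra of a real solvable finite-dimensional Lie algebra
is ad-nilpotent. -/
theorem ad_nilpotent_of_mem_derived {x : 𝔤} (hx : x ∈ derivedSeries ℝ 𝔤 1) :
    IsNilpotent (toEnd ℝ 𝔤 𝔤 x) := by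
  have h1 : (1 : ℂ) ⊗ₜ[ℝ] x ∈ derivedSeries ℂ (ℂ ⊗[ℝ] 𝔤) 1 := by
    rw [_root_.derivedSeries_baseChange]
    exact LieSubmodule.tmul_mem_baseChange_of_mem 1 hx
  have h2 : IsNilpotent (toEnd ℂ (ℂ ⊗[ℝ] 𝔤) (ℂ ⊗[ℝ] 𝔤) ((1:ℂ) ⊗ₜ[ℝ] x)) :=
    derived_nilpotent_aux (finrank ℂ (ℂ ⊗[ℝ] 𝔤)) (ℂ ⊗[ℝ] 𝔤) (ℂ ⊗[ℝ] 𝔤) rfl _ h1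
  rw [LieModule.toEnd_baseChange] at h2
  obtain ⟨k, hk⟩ := h2
  refine ⟨k, ?_⟩
  rw [← LinearMap.baseChange_pow] at hk
  ext m
  rw [LinearMap.zero_apply]
  apply one_tmul_eq_zero_iff
  have := congrArg (fun g => g ((1:ℂ) ⊗ₜ[ℝ] m)) hk
  simpa [LinearMap.baseChange_tmul] using this

theorem derived_isNilpotent_real :
    LieRing.IsNilpotent ↥(derivedSeries ℝ 𝔤 1) := by
  set N : LieIdeal ℝ 𝔤 := derivedSeries ℝ 𝔤 1 with hN
  have hE : LieAlgebra.IsEngelian ℝ ↥N := LieAlgebra.isEngelian_of_isNoetherian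
  apply hE
  intro x
  obtain ⟨k, hk⟩ := ad_nilpotent_of_mem_derived x.2
  refine ⟨k, ?_⟩
  ext y
  have hcoe : ∀ (j : ℕ) (y : ↥N), (((toEnd ℝ ↥N ↥N x ^ j) y : ↥N) : 𝔤)
      = (toEnd ℝ 𝔤 𝔤 (x : 𝔤) ^ j) (y : 𝔤) := by
    intro j
    induction j with
    | zero => intro y; simp
    | succ j ihj =>
      intro y
      rw [pow_succ, pow_succ, Module.End.mul_apply, Module.End.mul_apply,
        ihj ((toEnd ℝ ↥N ↥N x) y)]
      rfl
  have := hcoe k y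
  rw [hk] at this
  simp only [LinearMap.zero_apply] at this ⊢
  simpa using this


end Aux

/-- Claim 14.2 of Fels–Kaup.  Let `𝔤` be a finite-dimensional solvable
real Lie algebra and `𝔤₀ ⊆ 𝔤` a subalgebra such that every subalgebra `𝔤'` with
`𝔤' + 𝔤₀ = 𝔤` equals `𝔤`.  Then `𝔤₀` is contained in a nilpotent ideal of `𝔤` (hence in
the nilradical of `𝔤`). -/
theorem isotropy_in_nilradical_of_minimal
    (𝔤 : Type*) [LieRing 𝔤] [LieAlgebra ℝ 𝔤] [FiniteDimensional ℝ 𝔤]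
    [LieAlgebra.IsSolvable 𝔤]
    (𝔤₀ : LieSubalgebra ℝ 𝔤)
    (hmin : ∀ 𝔤' : LieSubalgebra ℝ 𝔤,
      𝔤'.toSubmodule ⊔ 𝔤₀.toSubmodule = ⊤ → 𝔤' = ⊤) :
    ∃ N : LieIdeal ℝ 𝔤, LieRing.IsNilpotent ↥N ∧ ∀ x ∈ 𝔤₀, x ∈ N := by
  refine ⟨LieAlgebra.derivedSeries ℝ 𝔤 1, derived_isNilpotent_real, ?_⟩
  intro x hx
  by_contra hxD
  have hxD' : x ∉ (LieAlgebra.derivedSeries ℝ 𝔤 1).toSubmodule := hxD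
  obtain ⟨f, hfx, hfD⟩ := Submodule.exists_dual_map_eq_bot_of_notMem hxD' inferInstance
  have hker : (LieAlgebra.derivedSeries ℝ 𝔤 1).toSubmodule ≤ LinearMap.ker f := by
    intro y hy
    have : f y ∈ Submodule.map f (LieAlgebra.derivedSeries ℝ 𝔤 1).toSubmodule := ⟨y, hy, rfl⟩
    rw [hfD] at this
    simpa using this
  have hbr : ∀ a b : 𝔤, ⁅a, b⁆ ∈ LieAlgebra.derivedSeries ℝ 𝔤 1 := by
    intro a b
    rw [LieAlgebra.derivedSeries_def, LieAlgebra.derivedSeriesOfIdeal_succ,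
      LieAlgebra.derivedSeriesOfIdeal_zero]
    exact LieSubmodule.lie_mem_lie (LieSubmodule.mem_top a) (LieSubmodule.mem_top b)
  set 𝔥 : LieSubalgebra ℝ 𝔤 :=
    { toSubmodule := LinearMap.ker f
      lie_mem' := fun {a b} _ _ => by
        show ⁅a, b⁆ ∈ LinearMap.ker f
        rw [LinearMap.mem_ker]
        exact hker (hbr a b) } with h𝔥
  have hsup : 𝔥.toSubmodule ⊔ 𝔤₀.toSubmodule = ⊤ := by
    rw [eq_top_iff]
    intro v _
    have hv : v = (v - (f v / f x) • x) + (f v / f x) • x := by abel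
    rw [hv]
    apply Submodule.add_mem_sup
    · show v - (f v / f x) • x ∈ LinearMap.ker f
      rw [LinearMap.mem_ker, map_sub, map_smul, smul_eq_mul, div_mul_cancel₀ _ hfx, sub_self]
    · exact Submodule.smul_mem _ _ hx
  have h𝔥top := hmin 𝔥 hsup
  have hx𝔥 : x ∈ 𝔥 := h𝔥top ▸ LieSubalgebra.mem_top x
  have : f x = 0 := hx𝔥
  exact hfx this
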